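/- For every n ≥ 2, the Sierpinski gasket graph S_n is a fractal: dim_R(S_n) = 2 while dim_P(complement of S_n) = 3. -/

import Mathlib

open SimpleGraph

/-- A graph together with three designated contact vertices. -/
structure Tetrad where
  V : Type
  G : SimpleGraph V
  x1 : V
  x2 : V
  x3 : V

/-- The gluing relation identifying contact vertices of three disjoint copies of `T`
in a cyclic fashion. -/
def glueRel (T : Tetrad) (a b : Fin 3 × T.V) : Prop :=
  (a = (0, T.x2) ∧ b = (1, T.x1)) ∨ (a = (1, T.x3) ∧ b = (2, T.x2)) ∨
    (a = (2, T.x1) ∧ b = (0, T.x3))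

/-- Glue three disjoint copies of `T` along contact vertices; the three unidentified
contact vertices become the contact vertices of the result. -/
def glue (T : Tetrad) : Tetrad where
  V := Quot (glueRel T)
  G :=
    { Adj := fun u v => u ≠ v ∧ ∃ (i : Fin 3) (a b : T.V),
        u = Quot.mk _ (i, a) ∧ v = Quot.mk _ (i, b) ∧ T.G.Adj a b
      symm := ⟨by
        rintro u v ⟨hne, i, a, b, hu, hv, hab⟩
        exact ⟨hne.symm, i, b, a, hv, hu, hab.symm⟩⟩
      loopless := ⟨fun u h => h.1 rfl⟩ }
  x1 := Quot.mk _ (0, T.x1)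
  x2 := Quot.mk _ (1, T.x2)
  x3 := Quot.mk _ (2, T.x3)

/-- The Sierpinski gasket graphs: `SG 1 = K₃`, and `SG (n+1)` is the gluing of three
copies of `SG n`. (`SG n` is the graph `S_n` for `n ≥ 1`.) -/
def SG : ℕ → Tetrad
  | 0 => ⟨Fin 3, ⊤, 0, 1, 2⟩
  | 1 => ⟨Fin 3, ⊤, 0, 1, 2⟩
  | n + 2 => glue (SG (n + 1))

/-- A clique `k`-cover, with set-valued clusters. -/
def CliqueKCoverS {V : Type} (G : SimpleGraph V) (k : ℕ) (𝒞 : Set (Set V)) : Prop :=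
  (∀ C ∈ 𝒞, G.IsClique C) ∧
  (∀ u v : V, G.Adj u v → ∃ C ∈ 𝒞, u ∈ C ∧ v ∈ C) ∧
  (∀ v : V, {C ∈ 𝒞 | v ∈ C}.Finite ∧ {C ∈ 𝒞 | v ∈ C}.ncard ≤ k)

/-- A separating equivalent `k`-cover with an explicit coloring `c` of the clusters. -/
def SepEqCoverWith {V : Type} (G : SimpleGraph V) (k : ℕ) (𝒞 : Set (Set V))
    (c : Set V → ℕ) : Prop :=
  (∀ C ∈ 𝒞, G.IsClique C) ∧
  (∀ u v : V, G.Adj u v → ∃ C ∈ 𝒞, u ∈ C ∧ v ∈ C) ∧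
  (∀ C ∈ 𝒞, c C < k) ∧
  (∀ C ∈ 𝒞, ∀ D ∈ 𝒞, C ≠ D → (C ∩ D).Nonempty → c C ≠ c D) ∧
  (∀ u v : V, u ≠ v → ∃ C ∈ 𝒞, (u ∈ C ∧ v ∉ C) ∨ (v ∈ C ∧ u ∉ C))

namespace Frac

def Dist (T : Tetrad) : Prop := T.x1 ≠ T.x2 ∧ T.x1 ≠ T.x3 ∧ T.x2 ≠ T.x3

variable {T : Tetrad}

lemma rel_left_fn {p q s : Fin 3 × T.V} (h1 : glueRel T q p) (h2 : glueRel T q s) : p = s := by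
  rcases h1 with ⟨hq, hp⟩ | ⟨hq, hp⟩ | ⟨hq, hp⟩ <;>
    rcases h2 with ⟨hq', hs⟩ | ⟨hq', hs⟩ | ⟨hq', hs⟩ <;>
    first
      | exact hp.trans hs.symm
      | (have e := hq.symm.trans hq'; simp [Prod.ext_iff] at e)

lemma rel_right_fn {p q s : Fin 3 × T.V} (h1 : glueRel T p q) (h2 : glueRel T s q) : p = s := by
  rcases h1 with ⟨hp, hq⟩ | ⟨hp, hq⟩ | ⟨hp, hq⟩ <;>
    rcases h2 with ⟨hs, hq'⟩ | ⟨hs, hq'⟩ | ⟨hs, hq'⟩ <;>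
    first
      | exact hp.trans hs.symm
      | (have e := hq.symm.trans hq'; simp [Prod.ext_iff] at e)

lemma rel_not_chain (hd : Dist T) {p q s : Fin 3 × T.V}
    (h1 : glueRel T p q) (h2 : glueRel T q s) : False := by
  obtain ⟨h12, h13, h23⟩ := hd
  rcases h1 with ⟨hp, hq⟩ | ⟨hp, hq⟩ | ⟨hp, hq⟩ <;>
    rcases h2 with ⟨hq', hs⟩ | ⟨hq', hs⟩ | ⟨hq', hs⟩ <;>
    (have e := hq.symm.trans hq'; injection e with e1 e2;
      first | exact absurd e1 (by decide) | exact h13 e2 | exact h12 e2.symm | exact h23 e2.symm)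

lemma mk_eq_iff (hd : Dist T) (p q : Fin 3 × T.V) :
    Quot.mk (glueRel T) p = Quot.mk (glueRel T) q ↔
      p = q ∨ glueRel T p q ∨ glueRel T q p := by
  constructor
  · intro h
    have h' := Quot.eqvGen_exact h
    clear h
    induction h' with
    | rel a b hab => exact Or.inr (Or.inl hab)
    | refl a => exact Or.inl rfl
    | symm a b hab ih =>
      rcases ih with rfl | h | h
      · exact Or.inl rfl
      · exact Or.inr (Or.inr h)
      · exact Or.inr (Or.inl h)
    | trans a b c hab hbc ih1 ih2 =>
      rcases ih1 with rfl | h1 | h1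
      · exact ih2
      · rcases ih2 with rfl | h2 | h2
        · exact Or.inr (Or.inl h1)
        · exact absurd h2 (fun h2 => rel_not_chain hd h1 h2)
        · exact Or.inl (rel_right_fn h1 h2)
      · rcases ih2 with rfl | h2 | h2
        · exact Or.inr (Or.inr h1)
        · exact Or.inl (rel_left_fn h1 h2)
        · exact absurd h1 (fun h1 => rel_not_chain hd h2 h1)
  · rintro (rfl | h | h)
    · rfl
    · exact Quot.sound h
    · exact (Quot.sound h).symm

lemma mk_inj_same (hd : Dist T) {i : Fin 3} {a b : T.V}
    (h : Quot.mk (glueRel T) (i, a) = Quot.mk (glueRel T) (i, b)) : a = b := by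
  rcases (mk_eq_iff hd _ _).1 h with h | h | h
  · exact congrArg Prod.snd h
  all_goals
    rcases h with ⟨h1, h2⟩ | ⟨h1, h2⟩ | ⟨h1, h2⟩ <;>
      (injection h1 with hi1 _; injection h2 with hi2 _;
        rw [hi1] at hi2; exact absurd hi2 (by decide))


def img (T : Tetrad) (i : Fin 3) (C : Set T.V) : Set (glue T).V :=
  (fun a => Quot.mk (glueRel T) (i, a)) '' C

lemma mem_img {i : Fin 3} {C : Set T.V} {u : (glue T).V} :
    u ∈ img T i C ↔ ∃ a ∈ C, u = Quot.mk (glueRel T) (i, a) := by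
  constructor
  · rintro ⟨a, ha, rfl⟩; exact ⟨a, ha, rfl⟩
  · rintro ⟨a, ha, rfl⟩; exact ⟨a, ha, rfl⟩

lemma mem_img_same (hd : Dist T) {i : Fin 3} {C : Set T.V} {b : T.V} :
    Quot.mk (glueRel T) (i, b) ∈ img T i C ↔ b ∈ C := by
  refine Iff.trans mem_img ?_
  constructor
  · rintro ⟨a, ha, h⟩; rwa [mk_inj_same hd h.symm] at ha
  · intro hb; exact ⟨b, hb, rfl⟩

/-- `(i,a)` is not identified with anything else. -/
def Unmatched (T : Tetrad) (p : Fin 3 × T.V) : Prop :=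
  ∀ q, ¬ glueRel T p q ∧ ¬ glueRel T q p

lemma unmatched_mk_eq (hp : Unmatched T p) {q : Fin 3 × T.V}
    (h : Quot.mk (glueRel T) p = Quot.mk (glueRel T) q) (hd : Dist T) : p = q := by
  rcases (mk_eq_iff hd _ _).1 h with h | h | h
  · exact h
  · exact absurd h (hp q).1
  · exact absurd h (hp q).2

lemma not_mem_img_of_ne (hd : Dist T) {i j : Fin 3} {a : T.V} {C : Set T.V}
    (hij : i ≠ j) (hm : ∀ b, ¬ glueRel T (i, a) (j, b) ∧ ¬ glueRel T (j, b) (i, a)) :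
    Quot.mk (glueRel T) (i, a) ∉ img T j C := by
  refine mt mem_img.1 ?_
  rintro ⟨b, hb, h⟩
  rcases (mk_eq_iff hd _ _).1 h with h | h | h
  · exact hij (congrArg Prod.fst h)
  · exact (hm b).1 h
  · exact (hm b).2 h

lemma glue_adj {u v : (glue T).V} :
    (glue T).G.Adj u v ↔ u ≠ v ∧ ∃ (i : Fin 3) (a b : T.V),
      u = Quot.mk (glueRel T) (i, a) ∧ v = Quot.mk (glueRel T) (i, b) ∧ T.G.Adj a b :=
  Iff.rfl

lemma glue_dist (hd : Dist T) : Dist (glue T) := by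
  obtain ⟨h12, h13, h23⟩ := hd
  refine ⟨?_, ?_, ?_⟩ <;>
    · intro h
      rcases (mk_eq_iff ⟨h12, h13, h23⟩ _ _).1 h with h | h | h
      · injection h with e1 e2; exact absurd e1 (by decide)
      all_goals
        rcases h with ⟨h1, h2⟩ | ⟨h1, h2⟩ | ⟨h1, h2⟩ <;>
          first
            | (injection h1 with e1 e2; exact absurd e1 (by decide))
            | (injection h2 with e1 e2; exact absurd e1 (by decide))
            | (injection h1 with e1 e2;
               first | exact h12 e2 | exact h13 e2 | exact h23 e2
                     | exact h12 e2.symm | exact h13 e2.symm | exact h23 e2.symm)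
            | (injection h2 with e1 e2;
               first | exact h12 e2 | exact h13 e2 | exact h23 e2
                     | exact h12 e2.symm | exact h13 e2.symm | exact h23 e2.symm)


lemma contact_of_rel {p q : Fin 3 × T.V} (h : glueRel T p q) :
    (p.2 = T.x1 ∨ p.2 = T.x2 ∨ p.2 = T.x3) ∧ (q.2 = T.x1 ∨ q.2 = T.x2 ∨ q.2 = T.x3) := by
  rcases h with ⟨h1, h2⟩ | ⟨h1, h2⟩ | ⟨h1, h2⟩ <;> rw [h1, h2] <;>
    exact ⟨by simp, by simp⟩

lemma unmatched_x1 (hd : Dist T) : Unmatched T (0, T.x1) := by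
  obtain ⟨h12, h13, h23⟩ := hd
  intro q
  refine ⟨?_, ?_⟩
  · rintro (⟨h1, h2⟩ | ⟨h1, h2⟩ | ⟨h1, h2⟩) <;> injection h1 with e1 e2 <;>
      first | exact absurd e1 (by decide) | exact h12 e2 | exact h13 e2
            | exact h12 e2.symm | exact h13 e2.symm
  · rintro (⟨h1, h2⟩ | ⟨h1, h2⟩ | ⟨h1, h2⟩) <;> injection h2 with e1 e2 <;>
      first | exact absurd e1 (by decide) | exact h12 e2 | exact h13 e2
            | exact h12 e2.symm | exact h13 e2.symm

lemma unmatched_x2 (hd : Dist T) : Unmatched T (1, T.x2) := by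
  obtain ⟨h12, h13, h23⟩ := hd
  intro q
  refine ⟨?_, ?_⟩
  · rintro (⟨h1, h2⟩ | ⟨h1, h2⟩ | ⟨h1, h2⟩) <;> injection h1 with e1 e2 <;>
      first | exact absurd e1 (by decide) | exact h12 e2 | exact h23 e2
            | exact h12 e2.symm | exact h23 e2.symm
  · rintro (⟨h1, h2⟩ | ⟨h1, h2⟩ | ⟨h1, h2⟩) <;> injection h2 with e1 e2 <;>
      first | exact absurd e1 (by decide) | exact h12 e2 | exact h23 e2
            | exact h12 e2.symm | exact h23 e2.symm

lemma unmatched_x3 (hd : Dist T) : Unmatched T (2, T.x3) := by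
  obtain ⟨h12, h13, h23⟩ := hd
  intro q
  refine ⟨?_, ?_⟩
  · rintro (⟨h1, h2⟩ | ⟨h1, h2⟩ | ⟨h1, h2⟩) <;> injection h1 with e1 e2 <;>
      first | exact absurd e1 (by decide) | exact h13 e2 | exact h23 e2
            | exact h13 e2.symm | exact h23 e2.symm
  · rintro (⟨h1, h2⟩ | ⟨h1, h2⟩ | ⟨h1, h2⟩) <;> injection h2 with e1 e2 <;>
      first | exact absurd e1 (by decide) | exact h13 e2 | exact h23 e2
            | exact h13 e2.symm | exact h23 e2.symm

lemma mem_img_cases (hd : Dist T) {i j : Fin 3} {a : T.V} {C : Set T.V}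
    (h : Quot.mk (glueRel T) (i, a) ∈ img T j C) :
    (j = i ∧ a ∈ C) ∨ ∃ b ∈ C, glueRel T (i, a) (j, b) ∨ glueRel T (j, b) (i, a) := by
  replace h := mem_img.1 h
  obtain ⟨b, hb, heq⟩ := h
  rcases (mk_eq_iff hd _ _).1 heq with h | h | h
  · injection h with e1 e2
    exact Or.inl ⟨e1.symm, by rw [e2]; exact hb⟩
  · exact Or.inr ⟨b, hb, Or.inl h⟩
  · exact Or.inr ⟨b, hb, Or.inr h⟩

/-- The induced cover on the glued graph. -/
def glueCov (T : Tetrad) (𝒯 : Set (Set T.V)) : Set (Set (glue T).V) :=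
  {S | ∃ p : Fin 3 × Set T.V, p.2 ∈ 𝒯 ∧ S = img T p.1 p.2}

lemma img_mem_glueCov {𝒯 : Set (Set T.V)} {i : Fin 3} {C : Set T.V} (h : C ∈ 𝒯) :
    img T i C ∈ glueCov T 𝒯 := ⟨(i, C), h, rfl⟩

lemma glueCov_clique {𝒯 : Set (Set T.V)} (hclq : ∀ C ∈ 𝒯, T.G.IsClique C) :
    ∀ C ∈ glueCov T 𝒯, (glue T).G.IsClique C := by
  rintro S ⟨⟨i, C⟩, hC, rfl⟩
  rintro u ⟨a, ha, rfl⟩ v ⟨b, hb, rfl⟩ hne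
  have hab : a ≠ b := fun h => hne (by rw [h])
  exact ⟨hne, i, a, b, rfl, rfl, hclq C hC ha hb hab⟩

lemma glueCov_cover {𝒯 : Set (Set T.V)}
    (hcov : ∀ u v, T.G.Adj u v → ∃ C ∈ 𝒯, u ∈ C ∧ v ∈ C) :
    ∀ u v, (glue T).G.Adj u v → ∃ C ∈ glueCov T 𝒯, u ∈ C ∧ v ∈ C := by
  rintro u v ⟨hne, i, a, b, rfl, rfl, hab⟩
  obtain ⟨C, hC, haC, hbC⟩ := hcov a b hab
  exact ⟨img T i C, img_mem_glueCov hC, ⟨a, haC, rfl⟩, ⟨b, hbC, rfl⟩⟩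

lemma glueCov_total {𝒯 : Set (Set T.V)}
    (htot : ∀ v, ∃ C ∈ 𝒯, v ∈ C) :
    ∀ v : (glue T).V, ∃ C ∈ glueCov T 𝒯, v ∈ C := by
  intro v
  induction v using Quot.ind with
  | _ p =>
    obtain ⟨i, a⟩ := p
    obtain ⟨C, hC, haC⟩ := htot a
    exact ⟨img T i C, img_mem_glueCov hC, a, haC, rfl⟩


lemma partner_unique (hd : Dist T) {p q s : Fin 3 × T.V}
    (h1 : glueRel T p q ∨ glueRel T q p) (h2 : glueRel T p s ∨ glueRel T s p) : q = s := by
  rcases h1 with h1 | h1 <;> rcases h2 with h2 | h2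
  · exact rel_left_fn h1 h2
  · exact (rel_not_chain hd h2 h1).elim
  · exact (rel_not_chain hd h1 h2).elim
  · exact rel_right_fn h1 h2

lemma ncard_le_one_of_subsingleton {α : Type*} {s : Set α} (h : s.Subsingleton) :
    s.ncard ≤ 1 :=
  (Set.ncard_le_one h.finite).2 fun a ha b hb => h ha hb

lemma glueCov_count (hd : Dist T) {𝒯 : Set (Set T.V)}
    (hcount : ∀ v, {C ∈ 𝒯 | v ∈ C}.Finite ∧ {C ∈ 𝒯 | v ∈ C}.ncard ≤ 2)
    (huniq : ∀ x : T.V, (x = T.x1 ∨ x = T.x2 ∨ x = T.x3) → {C ∈ 𝒯 | x ∈ C}.Subsingleton) :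
    ∀ v : (glue T).V, {C ∈ glueCov T 𝒯 | v ∈ C}.Finite ∧
      {C ∈ glueCov T 𝒯 | v ∈ C}.ncard ≤ 2 := by
  intro v
  induction v using Quot.ind with
  | _ p =>
  obtain ⟨i, a⟩ := p
  by_cases hm : ∃ q, glueRel T (i, a) q ∨ glueRel T q (i, a)
  · obtain ⟨⟨j₀, b₀⟩, hq⟩ := hm
    have hac : (a = T.x1 ∨ a = T.x2 ∨ a = T.x3) ∧ (b₀ = T.x1 ∨ b₀ = T.x2 ∨ b₀ = T.x3) := by
      rcases hq with h | h
      · exact ⟨(contact_of_rel h).1, (contact_of_rel h).2⟩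
      · exact ⟨(contact_of_rel h).2, (contact_of_rel h).1⟩
    have hsub : {C ∈ glueCov T 𝒯 | Quot.mk (glueRel T) (i, a) ∈ C} ⊆
        (img T i '' {C ∈ 𝒯 | a ∈ C}) ∪ (img T j₀ '' {C ∈ 𝒯 | b₀ ∈ C}) := by
      rintro S ⟨⟨⟨j, C⟩, hC, rfl⟩, hv⟩
      rcases mem_img_cases hd hv with ⟨rfl, haC⟩ | ⟨b, hb, hrel⟩
      · exact Or.inl ⟨C, ⟨hC, haC⟩, rfl⟩
      · have he : ((j, b) : Fin 3 × T.V) = (j₀, b₀) :=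
          partner_unique hd (p := (i, a)) hrel hq
        injection he with e1 e2
        refine Or.inr ⟨C, ⟨hC, by rw [← e2]; exact hb⟩, by rw [e1]⟩
    have h1s : {C ∈ 𝒯 | a ∈ C}.Subsingleton := huniq a hac.1
    have h2s : {C ∈ 𝒯 | b₀ ∈ C}.Subsingleton := huniq b₀ hac.2
    have hfin : ((img T i '' {C ∈ 𝒯 | a ∈ C}) ∪ (img T j₀ '' {C ∈ 𝒯 | b₀ ∈ C})).Finite :=
      ((h1s.finite.image _).union (h2s.finite.image _))
    refine ⟨hfin.subset hsub, ?_⟩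
    calc {C ∈ glueCov T 𝒯 | Quot.mk (glueRel T) (i, a) ∈ C}.ncard
        ≤ ((img T i '' {C ∈ 𝒯 | a ∈ C}) ∪ (img T j₀ '' {C ∈ 𝒯 | b₀ ∈ C})).ncard :=
          Set.ncard_le_ncard hsub hfin
      _ ≤ (img T i '' {C ∈ 𝒯 | a ∈ C}).ncard + (img T j₀ '' {C ∈ 𝒯 | b₀ ∈ C}).ncard :=
          Set.ncard_union_le _ _
      _ ≤ 1 + 1 := by
          gcongr <;> exact ncard_le_one_of_subsingleton (Set.Subsingleton.image ‹_› _)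
      _ ≤ 2 := by norm_num
  · have hsub : {C ∈ glueCov T 𝒯 | Quot.mk (glueRel T) (i, a) ∈ C} ⊆
        img T i '' {C ∈ 𝒯 | a ∈ C} := by
      rintro S ⟨⟨⟨j, C⟩, hC, rfl⟩, hv⟩
      rcases mem_img_cases hd hv with ⟨rfl, haC⟩ | ⟨b, hb, hrel⟩
      · exact ⟨C, ⟨hC, haC⟩, rfl⟩
      · exact absurd ⟨(j, b), hrel⟩ hm
    have hfin : (img T i '' {C ∈ 𝒯 | a ∈ C}).Finite := (hcount a).1.image _
    refine ⟨hfin.subset hsub, ?_⟩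
    calc {C ∈ glueCov T 𝒯 | Quot.mk (glueRel T) (i, a) ∈ C}.ncard
        ≤ (img T i '' {C ∈ 𝒯 | a ∈ C}).ncard := Set.ncard_le_ncard hsub hfin
      _ ≤ {C ∈ 𝒯 | a ∈ C}.ncard := Set.ncard_image_le (hcount a).1
      _ ≤ 2 := (hcount a).2

lemma glueCov_uniq (hd : Dist T) {𝒯 : Set (Set T.V)}
    (huniq : ∀ x : T.V, (x = T.x1 ∨ x = T.x2 ∨ x = T.x3) → {C ∈ 𝒯 | x ∈ C}.Subsingleton) :
    ∀ x : (glue T).V, (x = (glue T).x1 ∨ x = (glue T).x2 ∨ x = (glue T).x3) →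
      {C ∈ glueCov T 𝒯 | x ∈ C}.Subsingleton := by
  have key : ∀ (i : Fin 3) (y : T.V), Unmatched T (i, y) →
      (y = T.x1 ∨ y = T.x2 ∨ y = T.x3) →
      {C ∈ glueCov T 𝒯 | Quot.mk (glueRel T) (i, y) ∈ C}.Subsingleton := by
    intro i y hun hy
    rintro S ⟨⟨⟨j, C⟩, hC, rfl⟩, hvS⟩ S' ⟨⟨⟨j', C'⟩, hC', rfl⟩, hvS'⟩
    rcases mem_img_cases hd hvS with ⟨rfl, hyC⟩ | ⟨b, hb, hrel⟩
    · rcases mem_img_cases hd hvS' with ⟨rfl, hyC'⟩ | ⟨b, hb, hrel⟩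
      · rw [huniq y hy ⟨hC, hyC⟩ ⟨hC', hyC'⟩]
      · rcases hrel with h | h
        · exact absurd h (hun _).1
        · exact absurd h (hun _).2
    · rcases hrel with h | h
      · exact absurd h (hun _).1
      · exact absurd h (hun _).2
  rintro x (rfl | rfl | rfl)
  · exact key 0 T.x1 (unmatched_x1 hd) (Or.inl rfl)
  · exact key 1 T.x2 (unmatched_x2 hd) (Or.inr (Or.inl rfl))
  · exact key 2 T.x3 (unmatched_x3 hd) (Or.inr (Or.inr rfl))


lemma notMemImg (hd : Dist T) {i j : Fin 3} {a : T.V} {C : Set T.V}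
    (hun : Unmatched T (i, a)) (hij : i ≠ j) :
    Quot.mk (glueRel T) (i, a) ∉ img T j C :=
  not_mem_img_of_ne hd hij fun b => hun (j, b)

lemma not_mem_img_matched (hd : Dist T) {i j j₀ : Fin 3} {a b₀ : T.V} {C : Set T.V}
    (hq : glueRel T (i, a) (j₀, b₀) ∨ glueRel T (j₀, b₀) (i, a))
    (hij : i ≠ j) (hj : j₀ ≠ j) :
    Quot.mk (glueRel T) (i, a) ∉ img T j C :=
  not_mem_img_of_ne hd hij fun b =>
    ⟨fun h => hj (congrArg Prod.fst (partner_unique hd (Or.inl h) hq)).symm,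
     fun h => hj (congrArg Prod.fst (partner_unique hd (Or.inr h) hq)).symm⟩

lemma sep_same (hd : Dist T) {𝒯 : Set (Set T.V)}
    (htot : ∀ v, ∃ C ∈ 𝒯, v ∈ C)
    (hsep' : ∀ a b : T.V, a ≠ b → (∃ C ∈ 𝒯, (a ∈ C ∧ b ∉ C) ∨ (b ∈ C ∧ a ∉ C)) ∨
      ((a = T.x1 ∨ a = T.x2 ∨ a = T.x3) ∧ (b = T.x1 ∨ b = T.x2 ∨ b = T.x3))) :
    ∀ (i : Fin 3) (a b : T.V),
      Quot.mk (glueRel T) (i, a) ≠ Quot.mk (glueRel T) (i, b) →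
      ∃ C ∈ glueCov T 𝒯,
        (Quot.mk (glueRel T) (i, a) ∈ C ∧ Quot.mk (glueRel T) (i, b) ∉ C) ∨
        (Quot.mk (glueRel T) (i, b) ∈ C ∧ Quot.mk (glueRel T) (i, a) ∉ C) := by
  intro i a b hne
  have hab : a ≠ b := fun h => hne (by rw [h])
  have c1 : glueRel T (0, T.x2) (1, T.x1) := Or.inl ⟨rfl, rfl⟩
  have c2 : glueRel T (1, T.x3) (2, T.x2) := Or.inr (Or.inl ⟨rfl, rfl⟩)
  have c3 : glueRel T (2, T.x1) (0, T.x3) := Or.inr (Or.inr ⟨rfl, rfl⟩)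
  rcases hsep' a b hab with ⟨C, hC, h⟩ | ⟨ha, hb⟩
  · rcases h with ⟨h1, h2⟩ | ⟨h1, h2⟩
    · exact ⟨img T i C, img_mem_glueCov hC, Or.inl ⟨(mem_img_same hd).2 h1,
        fun hm => h2 ((mem_img_same hd).1 hm)⟩⟩
    · exact ⟨img T i C, img_mem_glueCov hC, Or.inr ⟨(mem_img_same hd).2 h1,
        fun hm => h2 ((mem_img_same hd).1 hm)⟩⟩
  · rcases ha with rfl | rfl | rfl <;> rcases hb with rfl | rfl | rfl
    · exact absurd rfl hab
    · fin_cases i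
      · obtain ⟨C, hC, hyC⟩ := htot T.x1
        exact ⟨img T 1 C, img_mem_glueCov hC, Or.inr ⟨mem_img.2 ⟨T.x1, hyC, Quot.sound c1⟩, notMemImg hd (unmatched_x1 hd) (by decide)⟩⟩
      · obtain ⟨C, hC, hyC⟩ := htot T.x2
        exact ⟨img T 0 C, img_mem_glueCov hC, Or.inl ⟨mem_img.2 ⟨T.x2, hyC, (Quot.sound c1).symm⟩, notMemImg hd (unmatched_x2 hd) (by decide)⟩⟩
      · obtain ⟨C, hC, hyC⟩ := htot T.x3
        exact ⟨img T 0 C, img_mem_glueCov hC, Or.inl ⟨mem_img.2 ⟨T.x3, hyC, Quot.sound c3⟩, not_mem_img_matched hd (Or.inr c2) (by decide) (by decide)⟩⟩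
    · fin_cases i
      · obtain ⟨C, hC, hyC⟩ := htot T.x1
        exact ⟨img T 2 C, img_mem_glueCov hC, Or.inr ⟨mem_img.2 ⟨T.x1, hyC, (Quot.sound c3).symm⟩, notMemImg hd (unmatched_x1 hd) (by decide)⟩⟩
      · obtain ⟨C, hC, hyC⟩ := htot T.x2
        exact ⟨img T 2 C, img_mem_glueCov hC, Or.inr ⟨mem_img.2 ⟨T.x2, hyC, Quot.sound c2⟩, not_mem_img_matched hd (Or.inr c1) (by decide) (by decide)⟩⟩
      · obtain ⟨C, hC, hyC⟩ := htot T.x3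
        exact ⟨img T 0 C, img_mem_glueCov hC, Or.inl ⟨mem_img.2 ⟨T.x3, hyC, Quot.sound c3⟩, notMemImg hd (unmatched_x3 hd) (by decide)⟩⟩
    · fin_cases i
      · obtain ⟨C, hC, hyC⟩ := htot T.x1
        exact ⟨img T 1 C, img_mem_glueCov hC, Or.inl ⟨mem_img.2 ⟨T.x1, hyC, Quot.sound c1⟩, notMemImg hd (unmatched_x1 hd) (by decide)⟩⟩
      · obtain ⟨C, hC, hyC⟩ := htot T.x2
        exact ⟨img T 0 C, img_mem_glueCov hC, Or.inr ⟨mem_img.2 ⟨T.x2, hyC, (Quot.sound c1).symm⟩, notMemImg hd (unmatched_x2 hd) (by decide)⟩⟩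
      · obtain ⟨C, hC, hyC⟩ := htot T.x3
        exact ⟨img T 0 C, img_mem_glueCov hC, Or.inr ⟨mem_img.2 ⟨T.x3, hyC, Quot.sound c3⟩, not_mem_img_matched hd (Or.inr c2) (by decide) (by decide)⟩⟩
    · exact absurd rfl hab
    · fin_cases i
      · obtain ⟨C, hC, hyC⟩ := htot T.x1
        exact ⟨img T 2 C, img_mem_glueCov hC, Or.inr ⟨mem_img.2 ⟨T.x1, hyC, (Quot.sound c3).symm⟩, not_mem_img_matched hd (Or.inl c1) (by decide) (by decide)⟩⟩
      · obtain ⟨C, hC, hyC⟩ := htot T.x2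
        exact ⟨img T 2 C, img_mem_glueCov hC, Or.inr ⟨mem_img.2 ⟨T.x2, hyC, Quot.sound c2⟩, notMemImg hd (unmatched_x2 hd) (by decide)⟩⟩
      · obtain ⟨C, hC, hyC⟩ := htot T.x3
        exact ⟨img T 1 C, img_mem_glueCov hC, Or.inl ⟨mem_img.2 ⟨T.x3, hyC, (Quot.sound c2).symm⟩, notMemImg hd (unmatched_x3 hd) (by decide)⟩⟩
    · fin_cases i
      · obtain ⟨C, hC, hyC⟩ := htot T.x1
        exact ⟨img T 2 C, img_mem_glueCov hC, Or.inl ⟨mem_img.2 ⟨T.x1, hyC, (Quot.sound c3).symm⟩, notMemImg hd (unmatched_x1 hd) (by decide)⟩⟩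
      · obtain ⟨C, hC, hyC⟩ := htot T.x2
        exact ⟨img T 2 C, img_mem_glueCov hC, Or.inl ⟨mem_img.2 ⟨T.x2, hyC, Quot.sound c2⟩, not_mem_img_matched hd (Or.inr c1) (by decide) (by decide)⟩⟩
      · obtain ⟨C, hC, hyC⟩ := htot T.x3
        exact ⟨img T 0 C, img_mem_glueCov hC, Or.inr ⟨mem_img.2 ⟨T.x3, hyC, Quot.sound c3⟩, notMemImg hd (unmatched_x3 hd) (by decide)⟩⟩
    · fin_cases i
      · obtain ⟨C, hC, hyC⟩ := htot T.x1
        exact ⟨img T 2 C, img_mem_glueCov hC, Or.inl ⟨mem_img.2 ⟨T.x1, hyC, (Quot.sound c3).symm⟩, not_mem_img_matched hd (Or.inl c1) (by decide) (by decide)⟩⟩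
      · obtain ⟨C, hC, hyC⟩ := htot T.x2
        exact ⟨img T 2 C, img_mem_glueCov hC, Or.inl ⟨mem_img.2 ⟨T.x2, hyC, Quot.sound c2⟩, notMemImg hd (unmatched_x2 hd) (by decide)⟩⟩
      · obtain ⟨C, hC, hyC⟩ := htot T.x3
        exact ⟨img T 1 C, img_mem_glueCov hC, Or.inr ⟨mem_img.2 ⟨T.x3, hyC, (Quot.sound c2).symm⟩, notMemImg hd (unmatched_x3 hd) (by decide)⟩⟩
    · exact absurd rfl hab

lemma glue_sep (hd : Dist T) {𝒯 : Set (Set T.V)}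
    (htot : ∀ v, ∃ C ∈ 𝒯, v ∈ C)
    (hsep' : ∀ a b : T.V, a ≠ b → (∃ C ∈ 𝒯, (a ∈ C ∧ b ∉ C) ∨ (b ∈ C ∧ a ∉ C)) ∨
      ((a = T.x1 ∨ a = T.x2 ∨ a = T.x3) ∧ (b = T.x1 ∨ b = T.x2 ∨ b = T.x3))) :
    ∀ u v : (glue T).V, u ≠ v →
      ∃ C ∈ glueCov T 𝒯, (u ∈ C ∧ v ∉ C) ∨ (v ∈ C ∧ u ∉ C) := by
  intro u v
  induction u using Quot.ind with
  | _ p =>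
  induction v using Quot.ind with
  | _ q =>
  obtain ⟨i, a⟩ := p
  obtain ⟨j, b⟩ := q
  intro hne
  by_cases hij : i = j
  · subst hij
    exact sep_same hd htot hsep' i a b hne
  · by_cases hm : ∃ b', glueRel T (j, b) (i, b') ∨ glueRel T (i, b') (j, b)
    · obtain ⟨b', hb'⟩ := hm
      have he : Quot.mk (glueRel T) (j, b) = Quot.mk (glueRel T) (i, b') := by
        rcases hb' with h | h
        · exact Quot.sound h
        · exact (Quot.sound h).symm
      rw [he] at hne ⊢
      exact sep_same hd htot hsep' i a b' hne
    · obtain ⟨C, hC, haC⟩ := htot a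
      refine ⟨img T i C, img_mem_glueCov hC, Or.inl ⟨(mem_img_same hd).2 haC, ?_⟩⟩
      intro hmem
      rcases mem_img_cases hd hmem with ⟨h1, _⟩ | ⟨b', hb', hrel⟩
      · exact hij h1
      · exact hm ⟨b', hrel⟩


open Classical in
/-- Induced coloring on the glued cover, from a copy-indexed coloring `F`. -/
noncomputable def gcol (T : Tetrad) (𝒯 : Set (Set T.V)) (F : Fin 3 → Set T.V → ℕ) :
    Set (glue T).V → ℕ := fun S =>
  if h : ∃ p : Fin 3 × Set T.V, p.2 ∈ 𝒯 ∧ S = img T p.1 p.2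
    then F (Classical.choose h).1 (Classical.choose h).2 else 0

lemma gcol_spec {𝒯 : Set (Set T.V)} {F : Fin 3 → Set T.V → ℕ} {S : Set (glue T).V}
    (h : S ∈ glueCov T 𝒯) :
    ∃ i C, C ∈ 𝒯 ∧ S = img T i C ∧ gcol T 𝒯 F S = F i C := by
  have h' : ∃ p : Fin 3 × Set T.V, p.2 ∈ 𝒯 ∧ S = img T p.1 p.2 := h
  exact ⟨(Classical.choose h').1, (Classical.choose h').2, (Classical.choose_spec h').1,
    (Classical.choose_spec h').2, by rw [gcol, dif_pos h']⟩

lemma gcol_lt {𝒯 : Set (Set T.V)} {F : Fin 3 → Set T.V → ℕ}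
    (hF : ∀ (i : Fin 3), ∀ C ∈ 𝒯, F i C < 3) :
    ∀ S ∈ glueCov T 𝒯, gcol T 𝒯 F S < 3 := by
  intro S hS
  obtain ⟨i, C, hC, -, hc⟩ := gcol_spec (F := F) hS
  rw [hc]; exact hF i C hC

lemma gcol_contact (hd : Dist T) {𝒯 : Set (Set T.V)} {F : Fin 3 → Set T.V → ℕ}
    (hFc1 : ∀ C ∈ 𝒯, T.x1 ∈ C → F 0 C = 0)
    (hFc2 : ∀ C ∈ 𝒯, T.x2 ∈ C → F 1 C = 1)
    (hFc3 : ∀ C ∈ 𝒯, T.x3 ∈ C → F 2 C = 2) :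
    ∀ S ∈ glueCov T 𝒯,
      ((glue T).x1 ∈ S → gcol T 𝒯 F S = 0) ∧
      ((glue T).x2 ∈ S → gcol T 𝒯 F S = 1) ∧
      ((glue T).x3 ∈ S → gcol T 𝒯 F S = 2) := by
  intro S hS
  obtain ⟨j, C, hC, rfl, hc⟩ := gcol_spec (F := F) hS
  refine ⟨fun hx => ?_, fun hx => ?_, fun hx => ?_⟩ <;> rw [hc]
  · rcases mem_img_cases hd hx with ⟨rfl, hxC⟩ | ⟨b, hb, hrel⟩
    · exact hFc1 C hC hxC
    · rcases hrel with h | h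
      · exact absurd h (unmatched_x1 hd _).1
      · exact absurd h (unmatched_x1 hd _).2
  · rcases mem_img_cases hd hx with ⟨rfl, hxC⟩ | ⟨b, hb, hrel⟩
    · exact hFc2 C hC hxC
    · rcases hrel with h | h
      · exact absurd h (unmatched_x2 hd _).1
      · exact absurd h (unmatched_x2 hd _).2
  · rcases mem_img_cases hd hx with ⟨rfl, hxC⟩ | ⟨b, hb, hrel⟩
    · exact hFc3 C hC hxC
    · rcases hrel with h | h
      · exact absurd h (unmatched_x3 hd _).1
      · exact absurd h (unmatched_x3 hd _).2

lemma gcol_sep (hd : Dist T) {𝒯 : Set (Set T.V)} {F : Fin 3 → Set T.V → ℕ}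
    (hFinj : ∀ (i : Fin 3), ∀ C ∈ 𝒯, ∀ D ∈ 𝒯, C ≠ D → (C ∩ D).Nonempty → F i C ≠ F i D)
    (hF01 : ∀ C ∈ 𝒯, ∀ D ∈ 𝒯, T.x2 ∈ C → T.x1 ∈ D → F 0 C ≠ F 1 D)
    (hF12 : ∀ C ∈ 𝒯, ∀ D ∈ 𝒯, T.x3 ∈ C → T.x2 ∈ D → F 1 C ≠ F 2 D)
    (hF20 : ∀ C ∈ 𝒯, ∀ D ∈ 𝒯, T.x1 ∈ C → T.x3 ∈ D → F 2 C ≠ F 0 D) :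
    ∀ S ∈ glueCov T 𝒯, ∀ S' ∈ glueCov T 𝒯, S ≠ S' → (S ∩ S').Nonempty →
      gcol T 𝒯 F S ≠ gcol T 𝒯 F S' := by
  intro S hS S' hS' hne hint
  obtain ⟨i, C, hC, rfl, hc⟩ := gcol_spec (F := F) hS
  obtain ⟨j, D, hD, rfl, hc'⟩ := gcol_spec (F := F) hS'
  rw [hc, hc']
  obtain ⟨u, huC, huD⟩ := hint
  obtain ⟨a, haC, rfl⟩ := mem_img.1 huC
  rcases mem_img_cases hd huD with ⟨rfl, haD⟩ | ⟨b, hbD, hrel⟩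
  · exact hFinj _ C hC D hD (fun h => hne (by rw [h])) ⟨a, haC, haD⟩
  · rcases hrel with h | h
    · rcases h with ⟨h1, h2⟩ | ⟨h1, h2⟩ | ⟨h1, h2⟩ <;>
        (injection h1 with e1 e2; injection h2 with e3 e4; subst e1 e3;
         rw [e2] at haC; rw [e4] at hbD)
      · exact hF01 C hC D hD haC hbD
      · exact hF12 C hC D hD haC hbD
      · exact hF20 C hC D hD haC hbD
    · rcases h with ⟨h1, h2⟩ | ⟨h1, h2⟩ | ⟨h1, h2⟩ <;>
        (injection h1 with e1 e2; injection h2 with e3 e4; subst e1 e3;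
         rw [e4] at haC; rw [e2] at hbD)
      · exact (hF01 D hD C hC hbD haC).symm
      · exact (hF12 D hD C hC hbD haC).symm
      · exact (hF20 D hD C hC hbD haC).symm


/-- An induced diamond (K₄ minus an edge) hanging at the contact vertex `x1`. -/
def Dia (T : Tetrad) : Prop :=
  ∃ b c d : T.V, T.G.Adj T.x1 b ∧ T.G.Adj T.x1 c ∧ T.G.Adj b c ∧ T.G.Adj b d ∧
    T.G.Adj c d ∧ ¬ T.G.Adj T.x1 d ∧ d ≠ T.x1 ∧ d ≠ T.x2 ∧ d ≠ T.x3

lemma unmatched_copy0 (hd : Dist T) {d : T.V} (h2 : d ≠ T.x2) (h3 : d ≠ T.x3) :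
    Unmatched T (0, d) := by
  intro q
  refine ⟨?_, ?_⟩
  · rintro (⟨h1, _⟩ | ⟨h1, _⟩ | ⟨h1, _⟩) <;> injection h1 with e1 e2 <;>
      first | exact absurd e1 (by decide) | exact h2 e2 | exact h3 e2
  · rintro (⟨_, h1⟩ | ⟨_, h1⟩ | ⟨_, h1⟩) <;> injection h1 with e1 e2 <;>
      first | exact absurd e1 (by decide) | exact h2 e2 | exact h3 e2

lemma glueDia (hd : Dist T) (h : Dia T) : Dia (glue T) := by
  obtain ⟨b, c, d, h1b, h1c, hbc, hbd, hcd, hnad, hd1, hd2, hd3⟩ := h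
  have hund : Unmatched T (0, d) := unmatched_copy0 hd hd2 hd3
  have adj0 : ∀ p q : T.V, T.G.Adj p q →
      (glue T).G.Adj (Quot.mk (glueRel T) (0, p)) (Quot.mk (glueRel T) (0, q)) :=
    fun p q hpq => ⟨fun he => hpq.ne (mk_inj_same hd he), 0, p, q, rfl, rfl, hpq⟩
  refine ⟨Quot.mk _ (0, b), Quot.mk _ (0, c), Quot.mk _ (0, d),
    adj0 _ _ h1b, adj0 _ _ h1c, adj0 _ _ hbc, adj0 _ _ hbd, adj0 _ _ hcd, ?_, ?_, ?_, ?_⟩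
  · rintro ⟨hne, i, p, q, h1, h2, hpq⟩
    have e1 := unmatched_mk_eq (unmatched_x1 hd) h1 hd
    have e2 := unmatched_mk_eq hund h2 hd
    injection e1 with f1 f2
    injection e2 with g1 g2
    rw [← f2, ← g2] at hpq
    exact hnad hpq
  · intro he
    exact hd1 (mk_inj_same hd he)
  · intro he
    have e := unmatched_mk_eq hund he hd
    injection e with f1 f2
    exact absurd f1 (by decide)
  · intro he
    have e := unmatched_mk_eq hund he hd
    injection e with f1 f2
    exact absurd f1 (by decide)

/-- The covers we build on every `S_n`, `n ≥ 2`. -/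
def CovA (T : Tetrad) : Prop :=
  ∃ 𝒯 : Set (Set T.V),
    (∀ C ∈ 𝒯, T.G.IsClique C) ∧
    (∀ u v, T.G.Adj u v → ∃ C ∈ 𝒯, u ∈ C ∧ v ∈ C) ∧
    (∀ v, {C ∈ 𝒯 | v ∈ C}.Finite ∧ {C ∈ 𝒯 | v ∈ C}.ncard ≤ 2) ∧
    (∀ v, ∃ C ∈ 𝒯, v ∈ C) ∧
    (∀ x : T.V, (x = T.x1 ∨ x = T.x2 ∨ x = T.x3) → {C ∈ 𝒯 | x ∈ C}.Subsingleton)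

def CovB (T : Tetrad) : Prop :=
  ∃ (𝒯 : Set (Set T.V)) (col : Set T.V → ℕ),
    (∀ C ∈ 𝒯, T.G.IsClique C) ∧
    (∀ u v, T.G.Adj u v → ∃ C ∈ 𝒯, u ∈ C ∧ v ∈ C) ∧
    (∀ v, ∃ C ∈ 𝒯, v ∈ C) ∧
    (∀ C ∈ 𝒯, col C < 3) ∧
    (∀ C ∈ 𝒯, ∀ D ∈ 𝒯, C ≠ D → (C ∩ D).Nonempty → col C ≠ col D) ∧
    (∀ C ∈ 𝒯, (T.x1 ∈ C → col C = 0) ∧ (T.x2 ∈ C → col C = 1) ∧ (T.x3 ∈ C → col C = 2)) ∧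
    (∀ u v : T.V, u ≠ v → ∃ C ∈ 𝒯, (u ∈ C ∧ v ∉ C) ∨ (v ∈ C ∧ u ∉ C))

def Good (T : Tetrad) : Prop := Dist T ∧ CovA T ∧ CovB T ∧ Dia T

lemma covA_glue (hd : Dist T) (h : CovA T) : CovA (glue T) := by
  obtain ⟨𝒯, hclq, hcov, hcount, htot, huniq⟩ := h
  exact ⟨glueCov T 𝒯, glueCov_clique hclq, glueCov_cover hcov,
    glueCov_count hd hcount huniq, glueCov_total htot, glueCov_uniq hd huniq⟩

lemma covB_glue (hd : Dist T) {𝒯 : Set (Set T.V)} {F : Fin 3 → Set T.V → ℕ}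
    (hclq : ∀ C ∈ 𝒯, T.G.IsClique C)
    (hcov : ∀ u v, T.G.Adj u v → ∃ C ∈ 𝒯, u ∈ C ∧ v ∈ C)
    (htot : ∀ v, ∃ C ∈ 𝒯, v ∈ C)
    (hsep' : ∀ a b : T.V, a ≠ b → (∃ C ∈ 𝒯, (a ∈ C ∧ b ∉ C) ∨ (b ∈ C ∧ a ∉ C)) ∨
      ((a = T.x1 ∨ a = T.x2 ∨ a = T.x3) ∧ (b = T.x1 ∨ b = T.x2 ∨ b = T.x3)))
    (hFlt : ∀ (i : Fin 3), ∀ C ∈ 𝒯, F i C < 3)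
    (hFinj : ∀ (i : Fin 3), ∀ C ∈ 𝒯, ∀ D ∈ 𝒯, C ≠ D → (C ∩ D).Nonempty → F i C ≠ F i D)
    (hF01 : ∀ C ∈ 𝒯, ∀ D ∈ 𝒯, T.x2 ∈ C → T.x1 ∈ D → F 0 C ≠ F 1 D)
    (hF12 : ∀ C ∈ 𝒯, ∀ D ∈ 𝒯, T.x3 ∈ C → T.x2 ∈ D → F 1 C ≠ F 2 D)
    (hF20 : ∀ C ∈ 𝒯, ∀ D ∈ 𝒯, T.x1 ∈ C → T.x3 ∈ D → F 2 C ≠ F 0 D)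
    (hFc1 : ∀ C ∈ 𝒯, T.x1 ∈ C → F 0 C = 0)
    (hFc2 : ∀ C ∈ 𝒯, T.x2 ∈ C → F 1 C = 1)
    (hFc3 : ∀ C ∈ 𝒯, T.x3 ∈ C → F 2 C = 2) : CovB (glue T) :=
  ⟨glueCov T 𝒯, gcol T 𝒯 F, glueCov_clique hclq, glueCov_cover hcov, glueCov_total htot,
    gcol_lt hFlt, gcol_sep hd hFinj hF01 hF12 hF20, gcol_contact hd hFc1 hFc2 hFc3,
    glue_sep hd htot hsep'⟩

lemma good_glue (hG : Good T) : Good (glue T) := by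
  obtain ⟨hd, hA, hB, hdia⟩ := hG
  refine ⟨glue_dist hd, covA_glue hd hA, ?_, glueDia hd hdia⟩
  obtain ⟨𝒯, col, hclq, hcov, htot, hlt, hcs, hcon, hsep⟩ := hB
  refine covB_glue hd (F := fun _ C => col C) hclq hcov htot
    (fun a b hab => Or.inl (hsep a b hab))
    (fun _ C hC => hlt C hC)
    (fun _ C hC D hD => hcs C hC D hD)
    (fun C hC D hD h2 h1 => ?_) (fun C hC D hD h3 h2 => ?_) (fun C hC D hD h1 h3 => ?_)
    (fun C hC h1 => (hcon C hC).1 h1) (fun C hC h2 => (hcon C hC).2.1 h2)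
    (fun C hC h3 => (hcon C hC).2.2 h3)
  · show col C ≠ col D
    rw [(hcon C hC).2.1 h2, (hcon D hD).1 h1]; omega
  · show col C ≠ col D
    rw [(hcon C hC).2.2 h3, (hcon D hD).2.1 h2]; omega
  · show col C ≠ col D
    rw [(hcon C hC).1 h1, (hcon D hD).2.2 h3]; omega

/-- `S₁ = K₃`. -/
abbrev T₀ : Tetrad := ⟨Fin 3, ⊤, 0, 1, 2⟩

lemma hdT₀ : Dist T₀ :=
  ⟨show (0 : Fin 3) ≠ 1 by decide, show (0 : Fin 3) ≠ 2 by decide,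
    show (1 : Fin 3) ≠ 2 by decide⟩

lemma good_base : Good (glue T₀) := by
  have hclq : ∀ C ∈ ({Set.univ} : Set (Set T₀.V)), T₀.G.IsClique C := by
    rintro C rfl u _ v _ huv
    exact (SimpleGraph.top_adj _ _).mpr huv
  have hcov : ∀ u v, T₀.G.Adj u v → ∃ C ∈ ({Set.univ} : Set (Set T₀.V)), u ∈ C ∧ v ∈ C :=
    fun u v _ => ⟨Set.univ, rfl, trivial, trivial⟩
  have htot : ∀ v, ∃ C ∈ ({Set.univ} : Set (Set T₀.V)), v ∈ C :=
    fun v => ⟨Set.univ, rfl, trivial⟩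
  have hall : ∀ x : T₀.V, x = T₀.x1 ∨ x = T₀.x2 ∨ x = T₀.x3 :=
    show ∀ x : Fin 3, x = 0 ∨ x = 1 ∨ x = 2 by decide
  have hsingl : ∀ v : T₀.V, {C ∈ ({Set.univ} : Set (Set T₀.V)) | v ∈ C} = {Set.univ} := by
    intro v
    ext C
    constructor
    · rintro ⟨h, -⟩
      exact h
    · rintro rfl
      exact ⟨rfl, trivial⟩
  refine ⟨glue_dist hdT₀, ?_, ?_, ?_⟩
  · refine covA_glue hdT₀ ⟨{Set.univ}, hclq, hcov, fun v => ?_, htot, fun x _ => ?_⟩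
    · rw [hsingl v]
      exact ⟨Set.finite_singleton _, by rw [Set.ncard_singleton]; omega⟩
    · rw [hsingl x]
      exact Set.subsingleton_singleton
  · refine covB_glue hdT₀ (𝒯 := {Set.univ}) (F := fun i _ => (i : ℕ)) hclq hcov htot
      (fun a b _ => Or.inr ⟨hall a, hall b⟩)
      (fun i C _ => i.isLt)
      (fun i C hC D hD hne _ => absurd (hC.trans hD.symm) hne)
      (fun _ _ _ _ _ _ => show ((0 : Fin 3) : ℕ) ≠ ((1 : Fin 3) : ℕ) by decide)
      (fun _ _ _ _ _ _ => show ((1 : Fin 3) : ℕ) ≠ ((2 : Fin 3) : ℕ) by decide)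
      (fun _ _ _ _ _ _ => show ((2 : Fin 3) : ℕ) ≠ ((0 : Fin 3) : ℕ) by decide)
      (fun _ _ _ => show ((0 : Fin 3) : ℕ) = 0 by decide)
      (fun _ _ _ => show ((1 : Fin 3) : ℕ) = 1 by decide)
      (fun _ _ _ => show ((2 : Fin 3) : ℕ) = 2 by decide)
  · -- the diamond in S₂
    have adjT : ∀ p q : Fin 3, p ≠ q → T₀.G.Adj p q := fun p q h => (SimpleGraph.top_adj _ _).mpr h
    have adj0 : ∀ (i : Fin 3) (p q : Fin 3), p ≠ q →
        (glue T₀).G.Adj (Quot.mk (glueRel T₀) (i, p)) (Quot.mk (glueRel T₀) (i, q)) :=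
      fun i p q h => ⟨fun he => h (mk_inj_same hdT₀ he), i, p, q, rfl, rfl, adjT p q h⟩
    have e1 : Quot.mk (glueRel T₀) ((0 : Fin 3), (1 : Fin 3)) = Quot.mk (glueRel T₀) (1, 0) :=
      Quot.sound (Or.inl ⟨rfl, rfl⟩)
    have e2 : Quot.mk (glueRel T₀) ((0 : Fin 3), (2 : Fin 3)) = Quot.mk (glueRel T₀) (2, 0) :=
      (show Quot.mk (glueRel T₀) ((2 : Fin 3), (0 : Fin 3)) = Quot.mk (glueRel T₀) (0, 2) from
        Quot.sound (Or.inr (Or.inr ⟨rfl, rfl⟩))).symm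
    have e3 : Quot.mk (glueRel T₀) ((1 : Fin 3), (2 : Fin 3)) = Quot.mk (glueRel T₀) (2, 1) :=
      Quot.sound (Or.inr (Or.inl ⟨rfl, rfl⟩))
    refine ⟨Quot.mk _ (0, 1), Quot.mk _ (0, 2), Quot.mk _ (1, 2),
      adj0 0 0 1 (by decide), adj0 0 0 2 (by decide), adj0 0 1 2 (by decide), ?_, ?_, ?_, ?_, ?_, ?_⟩
    · rw [e1]
      exact adj0 1 0 2 (by decide)
    · rw [e2, e3]
      exact adj0 2 0 1 (by decide)
    · rintro ⟨hne, i, p, q, h1, h2, hpq⟩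
      have e := unmatched_mk_eq (unmatched_x1 hdT₀) h1 hdT₀
      injection e with f1 f2
      rw [← f1] at h2
      rcases (mk_eq_iff hdT₀ _ _).1 h2 with h | h | h
      · injection h with e1 e2
        first | exact absurd e1 (by decide) | exact absurd e2 (by decide)
      · rcases h with ⟨ha, hb⟩ | ⟨ha, hb⟩ | ⟨ha, hb⟩ <;>
          first
            | (injection ha with e1 e2;
               first | exact absurd e1 (by decide) | exact absurd e2 (by decide))
            | (injection hb with e1 e2;
               first | exact absurd e1 (by decide) | exact absurd e2 (by decide))
      · rcases h with ⟨ha, hb⟩ | ⟨ha, hb⟩ | ⟨ha, hb⟩ <;>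
          first
            | (injection ha with e1 e2;
               first | exact absurd e1 (by decide) | exact absurd e2 (by decide))
            | (injection hb with e1 e2;
               first | exact absurd e1 (by decide) | exact absurd e2 (by decide))
    · intro hx
      rcases (mk_eq_iff hdT₀ _ _).1 hx with h | h | h
      · injection h with e1 e2
        first | exact absurd e1 (by decide) | exact absurd e2 (by decide)
      · rcases h with ⟨ha, hb⟩ | ⟨ha, hb⟩ | ⟨ha, hb⟩ <;>
          first
            | (injection ha with e1 e2;
               first | exact absurd e1 (by decide) | exact absurd e2 (by decide))
            | (injection hb with e1 e2;
               first | exact absurd e1 (by decide) | exact absurd e2 (by decide))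
      · rcases h with ⟨ha, hb⟩ | ⟨ha, hb⟩ | ⟨ha, hb⟩ <;>
          first
            | (injection ha with e1 e2;
               first | exact absurd e1 (by decide) | exact absurd e2 (by decide))
            | (injection hb with e1 e2;
               first | exact absurd e1 (by decide) | exact absurd e2 (by decide))
    · intro hx
      rcases (mk_eq_iff hdT₀ _ _).1 hx with h | h | h
      · injection h with e1 e2
        first | exact absurd e1 (by decide) | exact absurd e2 (by decide)
      · rcases h with ⟨ha, hb⟩ | ⟨ha, hb⟩ | ⟨ha, hb⟩ <;>
          first
            | (injection ha with e1 e2;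
               first | exact absurd e1 (by decide) | exact absurd e2 (by decide))
            | (injection hb with e1 e2;
               first | exact absurd e1 (by decide) | exact absurd e2 (by decide))
      · rcases h with ⟨ha, hb⟩ | ⟨ha, hb⟩ | ⟨ha, hb⟩ <;>
          first
            | (injection ha with e1 e2;
               first | exact absurd e1 (by decide) | exact absurd e2 (by decide))
            | (injection hb with e1 e2;
               first | exact absurd e1 (by decide) | exact absurd e2 (by decide))
    · intro hx
      rcases (mk_eq_iff hdT₀ _ _).1 hx with h | h | h
      · injection h with e1 e2
        first | exact absurd e1 (by decide) | exact absurd e2 (by decide)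
      · rcases h with ⟨ha, hb⟩ | ⟨ha, hb⟩ | ⟨ha, hb⟩ <;>
          first
            | (injection ha with e1 e2;
               first | exact absurd e1 (by decide) | exact absurd e2 (by decide))
            | (injection hb with e1 e2;
               first | exact absurd e1 (by decide) | exact absurd e2 (by decide))
      · rcases h with ⟨ha, hb⟩ | ⟨ha, hb⟩ | ⟨ha, hb⟩ <;>
          first
            | (injection ha with e1 e2;
               first | exact absurd e1 (by decide) | exact absurd e2 (by decide))
            | (injection hb with e1 e2;
               first | exact absurd e1 (by decide) | exact absurd e2 (by decide))

lemma good_SG : ∀ m : ℕ, Good (SG (m + 2)) := by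
  intro m
  induction m with
  | zero => exact good_base
  | succ k ih => exact good_glue ih


/-- No clique cover with at most one cluster per vertex exists in presence of an
induced path `a - b - d`. -/
lemma no_cov1 {V : Type} {G : SimpleGraph V} {a b d : V}
    (hba : G.Adj b a) (hbd : G.Adj b d) (hnad : ¬ G.Adj a d) (hne : a ≠ d)
    {k : ℕ} (hk : k ≤ 1) {𝒞 : Set (Set V)} (h : CliqueKCoverS G k 𝒞) : False := by
  obtain ⟨hclq, hcov, hcount⟩ := h
  obtain ⟨C1, hC1, hbC1, haC1⟩ := hcov b a hba
  obtain ⟨C2, hC2, hbC2, hdC2⟩ := hcov b d hbd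
  have hfin := (hcount b).1
  have hone : {C ∈ 𝒞 | b ∈ C}.ncard ≤ 1 := le_trans (hcount b).2 hk
  have hCC : C1 = C2 :=
    (Set.ncard_le_one hfin).1 hone C1 ⟨hC1, hbC1⟩ C2 ⟨hC2, hbC2⟩
  exact hnad (hclq C1 hC1 haC1 (by rw [hCC]; exact hdC2) hne)

/-- No separating equivalent cover with fewer than three colors exists in presence of an
induced diamond. -/
lemma no_sep2 {V : Type} {G : SimpleGraph V} {a b c d : V}
    (hab : G.Adj a b) (hac : G.Adj a c) (hbc : G.Adj b c) (hbd : G.Adj b d)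
    (hcd : G.Adj c d) (hnad : ¬ G.Adj a d) (hnead : a ≠ d)
    {k : ℕ} (hk : k ≤ 2) {𝒞 : Set (Set V)} {col : Set V → ℕ}
    (h : SepEqCoverWith G k 𝒞 col) : False := by
  obtain ⟨hclq, hcov, hlt, hcsep, hsep⟩ := h
  have hlt2 : ∀ C ∈ 𝒞, col C < 2 := fun C hC => lt_of_lt_of_le (hlt C hC) hk
  have triple : ∀ C ∈ 𝒞, ∀ D ∈ 𝒞, ∀ E ∈ 𝒞, C ≠ D → C ≠ E → D ≠ E →
      (C ∩ D).Nonempty → (C ∩ E).Nonempty → (D ∩ E).Nonempty → False := by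
    intro C hC D hD E hE h1 h2 h3 i1 i2 i3
    have q1 := hcsep C hC D hD h1 i1
    have q2 := hcsep C hC E hE h2 i2
    have q3 := hcsep D hD E hE h3 i3
    have l1 := hlt2 C hC
    have l2 := hlt2 D hD
    have l3 := hlt2 E hE
    omega
  obtain ⟨C0, hC0, hbC0, hcC0⟩ := hcov b c hbc
  by_cases haC0 : a ∈ C0 <;> by_cases hdC0 : d ∈ C0
  · exact hnad (hclq C0 hC0 haC0 hdC0 hnead)
  · obtain ⟨Cbd, hCbd, hbCbd, hdCbd⟩ := hcov b d hbd
    obtain ⟨Ccd, hCcd, hcCcd, hdCcd⟩ := hcov c d hcd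
    have h1 : C0 ≠ Cbd := fun h => hdC0 (h ▸ hdCbd)
    have h2 : C0 ≠ Ccd := fun h => hdC0 (h ▸ hdCcd)
    by_cases h3 : Cbd = Ccd
    · subst h3
      have claim : ∀ E ∈ 𝒞, (b ∈ E ∨ c ∈ E) → E = C0 ∨ E = Cbd := by
        intro E hE hbE
        by_contra hcon
        push_neg at hcon
        obtain ⟨e1, e2⟩ := hcon
        rcases hbE with hbE | hcE
        · exact triple E hE C0 hC0 Cbd hCbd e1 e2 h1 ⟨b, hbE, hbC0⟩ ⟨b, hbE, hbCbd⟩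
            ⟨b, hbC0, hbCbd⟩
        · exact triple E hE C0 hC0 Cbd hCbd e1 e2 h1 ⟨c, hcE, hcC0⟩ ⟨c, hcE, hcCcd⟩
            ⟨b, hbC0, hbCbd⟩
      obtain ⟨E, hE, hEsep⟩ := hsep b c hbc.ne
      rcases hEsep with ⟨hbE, hcE⟩ | ⟨hcE, hbE⟩
      · rcases claim E hE (Or.inl hbE) with rfl | rfl
        · exact hcE hcC0
        · exact hcE hcCcd
      · rcases claim E hE (Or.inr hcE) with rfl | rfl
        · exact hbE hbC0
        · exact hbE hbCbd
    · exact triple C0 hC0 Cbd hCbd Ccd hCcd h1 h2 h3 ⟨b, hbC0, hbCbd⟩ ⟨c, hcC0, hcCcd⟩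
        ⟨d, hdCbd, hdCcd⟩
  · obtain ⟨Cab, hCab, haCab, hbCab⟩ := hcov a b hab
    obtain ⟨Cac, hCac, haCac, hcCac⟩ := hcov a c hac
    have h1 : C0 ≠ Cab := fun h => haC0 (h ▸ haCab)
    have h2 : C0 ≠ Cac := fun h => haC0 (h ▸ haCac)
    by_cases h3 : Cab = Cac
    · subst h3
      have claim : ∀ E ∈ 𝒞, (b ∈ E ∨ c ∈ E) → E = C0 ∨ E = Cab := by
        intro E hE hbE
        by_contra hcon
        push_neg at hcon
        obtain ⟨e1, e2⟩ := hcon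
        rcases hbE with hbE | hcE
        · exact triple E hE C0 hC0 Cab hCab e1 e2 h1 ⟨b, hbE, hbC0⟩ ⟨b, hbE, hbCab⟩
            ⟨b, hbC0, hbCab⟩
        · exact triple E hE C0 hC0 Cab hCab e1 e2 h1 ⟨c, hcE, hcC0⟩ ⟨c, hcE, hcCac⟩
            ⟨b, hbC0, hbCab⟩
      obtain ⟨E, hE, hEsep⟩ := hsep b c hbc.ne
      rcases hEsep with ⟨hbE, hcE⟩ | ⟨hcE, hbE⟩
      · rcases claim E hE (Or.inl hbE) with rfl | rfl
        · exact hcE hcC0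
        · exact hcE hcCac
      · rcases claim E hE (Or.inr hcE) with rfl | rfl
        · exact hbE hbC0
        · exact hbE hbCab
    · exact triple C0 hC0 Cab hCab Cac hCac h1 h2 h3 ⟨b, hbC0, hbCab⟩ ⟨c, hcC0, hcCac⟩
        ⟨a, haCab, haCac⟩
  · obtain ⟨Cab, hCab, haCab, hbCab⟩ := hcov a b hab
    obtain ⟨Cbd, hCbd, hbCbd, hdCbd⟩ := hcov b d hbd
    have h1 : C0 ≠ Cab := fun h => haC0 (h ▸ haCab)
    have h2 : C0 ≠ Cbd := fun h => hdC0 (h ▸ hdCbd)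
    by_cases h3 : Cab = Cbd
    · subst h3
      exact hnad (hclq Cab hCab haCab hdCbd hnead)
    · exact triple C0 hC0 Cab hCab Cbd hCbd h1 h2 h3 ⟨b, hbC0, hbCab⟩ ⟨b, hbC0, hbCbd⟩
        ⟨b, hbCab, hbCbd⟩

end Frac

open Frac

/-- For every `n ≥ 2` the Sierpinski gasket graph `S_n` is a fractal:
its rank dimension equals 2 while the Prague dimension of its complement equals 3. -/
theorem stmt_14 (n : ℕ) (hn : 2 ≤ n) :
    sInf {k : ℕ | ∃ 𝒞 : Set (Set (SG n).V), CliqueKCoverS (SG n).G k 𝒞} = 2 ∧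
    sInf {k : ℕ | ∃ (𝒞 : Set (Set (SG n).V)) (c : Set (SG n).V → ℕ),
        SepEqCoverWith (SG n).G k 𝒞 c} = 3 := by
  obtain ⟨m, rfl⟩ : ∃ m, n = m + 2 := ⟨n - 2, by omega⟩
  obtain ⟨hdist, hA, hB, hdia⟩ := good_SG m
  obtain ⟨b, c, d, h1b, h1c, hbc, hbd, hcd, hnad, hd1, hd2, hd3⟩ := hdia
  constructor
  · obtain ⟨𝒯, hclq, hcov, hcount, htot, huniq⟩ := hA
    have h2 : 2 ∈ {k : ℕ | ∃ 𝒞 : Set (Set (SG (m + 2)).V), CliqueKCoverS (SG (m + 2)).G k 𝒞} :=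
      ⟨𝒯, hclq, hcov, hcount⟩
    have hlb : ∀ k ∈ {k : ℕ | ∃ 𝒞 : Set (Set (SG (m + 2)).V),
        CliqueKCoverS (SG (m + 2)).G k 𝒞}, 2 ≤ k := by
      rintro k ⟨𝒞, hc⟩
      by_contra hlt
      exact no_cov1 h1b.symm hbd hnad hd1.symm (by omega) hc
    exact le_antisymm (Nat.sInf_le h2) (hlb _ (Nat.sInf_mem ⟨2, h2⟩))
  · obtain ⟨𝒯, col, hclq, hcov, htot, hlt, hcs, hcon, hsep⟩ := hB
    have h3 : 3 ∈ {k : ℕ | ∃ (𝒞 : Set (Set (SG (m + 2)).V)) (c : Set (SG (m + 2)).V → ℕ),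
        SepEqCoverWith (SG (m + 2)).G k 𝒞 c} :=
      ⟨𝒯, col, hclq, hcov, hlt, hcs, hsep⟩
    have hlb : ∀ k ∈ {k : ℕ | ∃ (𝒞 : Set (Set (SG (m + 2)).V)) (c : Set (SG (m + 2)).V → ℕ),
        SepEqCoverWith (SG (m + 2)).G k 𝒞 c}, 3 ≤ k := by
      rintro k ⟨𝒞, c', hc⟩
      by_contra hlt'
      exact no_sep2 h1b h1c hbc hbd hcd hnad hd1.symm (by omega) hc
    exact le_antisymm (Nat.sInf_le h3) (hlb _ (Nat.sInf_mem ⟨3, h3⟩))
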